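/- Let d ≥ 1, let (φ_j)_{j∈J} be a finite family of unit vectors in ℂ^d, and let (c_j)_{j∈J} be real numbers. Then the signed-frame identity v = ∑_{j∈J} c_j·⟨v, φ_j⟩·φ_j holds for all v ∈ ℂ^d if and only if ∑_{j∈J} c_j = d and ∑_{i∈J}∑_{j∈J} c_i c_j |⟨φ_i, φ_j⟩|² = (1/d)·(∑_{j∈J} c_j)²; that is, signed tight frames are exactly the signed spherical (1,1)-designs. -/

import Mathlib

open scoped BigOperators
open scoped ComplexConjugate

/-- **Signed tight frames are exactly the signed spherical `(1,1)`-designs.**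
For unit vectors `(φ j)` in `ℂ^d` and real coefficients `(c j)`, the signed-frame
identity `v = ∑ j c_j ⟨v, φ_j⟩ φ_j` holds for all `v` if and only if `∑ j c_j = d`
and `∑ i ∑ j c_i c_j |⟨φ_i, φ_j⟩|² = (1/d)(∑ j c_j)²`
(inner products conjugate-linear so that `⟨v, φ⟩φ` is the rank-one projection action;
in Mathlib's convention this reads `(c j * ⟪φ j, v⟫) • φ j`). -/
theorem signed_tight_frame_iff_signed_design (d : ℕ) (hd : 1 ≤ d)
    {ι : Type*} [Fintype ι]
    (φ : ι → EuclideanSpace ℂ (Fin d)) (hφ : ∀ j, ‖φ j‖ = 1) (c : ι → ℝ) :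
    (∀ v : EuclideanSpace ℂ (Fin d),
        v = ∑ j, ((c j : ℂ) * (inner ℂ (φ j) v : ℂ)) • φ j) ↔
      (∑ j, c j = (d : ℝ) ∧
        ∑ i, ∑ j, c i * c j * ‖(inner ℂ (φ i) (φ j) : ℂ)‖ ^ 2 =
          (1 / (d : ℝ)) * (∑ j, c j) ^ 2) := by
  classical
  set e : Fin d → EuclideanSpace ℂ (Fin d) := fun k => EuclideanSpace.single k (1:ℂ) with he
  set S : EuclideanSpace ℂ (Fin d) → EuclideanSpace ℂ (Fin d) :=
    fun v => ∑ j, ((c j : ℂ) * (inner ℂ (φ j) v : ℂ)) • φ j with hS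
  have hdR : (d : ℝ) ≠ 0 := by positivity
  have hre : ∀ (x : EuclideanSpace ℂ (Fin d)), (inner ℂ x x : ℂ).re = ‖x‖ ^ 2 := by
    intro x
    rw [inner_self_eq_norm_sq_to_K]; norm_cast
  have hφe : ∀ (j : ι) (k : Fin d), (inner ℂ (φ j) (e k) : ℂ) = conj ((φ j) k) := by
    intro j k
    simp [he, EuclideanSpace.single_apply, mul_ite, Finset.sum_ite_eq', EuclideanSpace.inner_single_right]
  have hee : ∀ k, (inner ℂ (e k) (e k) : ℂ) = 1 := by
    intro k; simp [he, EuclideanSpace.inner_single_right]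
  have hφφ : ∀ j, (inner ℂ (φ j) (φ j) : ℂ) = 1 := by
    intro j
    rw [inner_self_eq_norm_sq_to_K, hφ j]; norm_num
  -- C2
  have C2 : (∑ k, (inner ℂ (S (e k)) (e k) : ℂ)) = ((∑ j, c j : ℝ) : ℂ) := by
    have step : ∀ k, (inner ℂ (S (e k)) (e k) : ℂ)
        = ∑ j, (c j : ℂ) * (conj ((φ j) k) * (φ j) k) := by
      intro k
      simp only [hS, sum_inner, inner_smul_left, map_mul, Complex.conj_conj,
        Complex.conj_ofReal, hφe]
      exact Finset.sum_congr rfl fun j _ => by ring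
    rw [Finset.sum_congr rfl fun k _ => step k, Finset.sum_comm]
    push_cast
    refine Finset.sum_congr rfl fun j _ => ?_
    rw [← Finset.mul_sum]
    have : (∑ k, conj ((φ j) k) * (φ j) k) = (inner ℂ (φ j) (φ j) : ℂ) := by
      rw [PiLp.inner_apply]; exact Finset.sum_congr rfl fun k _ => (RCLike.inner_apply' _ _).symm
    rw [this, hφφ, mul_one]
  -- C1
  have C1 : (∑ k, (inner ℂ (S (e k)) (S (e k)) : ℂ))
      = ((∑ i, ∑ j, c i * c j * ‖(inner ℂ (φ i) (φ j) : ℂ)‖ ^ 2 : ℝ) : ℂ) := by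
    have step : ∀ k, (inner ℂ (S (e k)) (S (e k)) : ℂ)
        = ∑ j, ∑ i, (c i : ℂ) * c j * ((φ i) k * conj ((φ j) k)) *
            (inner ℂ (φ i) (φ j) : ℂ) := by
      intro k
      simp only [hS, sum_inner, inner_sum, inner_smul_left, inner_smul_right, map_mul,
        Complex.conj_conj, Complex.conj_ofReal, hφe]
      refine Finset.sum_congr rfl fun j _ => ?_
      rw [Finset.mul_sum]
      exact Finset.sum_congr rfl fun i _ => by ring
    rw [Finset.sum_congr rfl fun k _ => step k, Finset.sum_comm]
    rw [show (∑ j : ι, ∑ k : Fin d, ∑ i : ι, (c i : ℂ) * c j * ((φ i) k * conj ((φ j) k)) *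
        (inner ℂ (φ i) (φ j) : ℂ))
      = ∑ j : ι, ∑ i : ι, ∑ k : Fin d, (c i : ℂ) * c j * ((φ i) k * conj ((φ j) k)) *
        (inner ℂ (φ i) (φ j) : ℂ) from Finset.sum_congr rfl fun j _ => Finset.sum_comm,
      Finset.sum_comm]
    push_cast
    refine Finset.sum_congr rfl fun i _ => Finset.sum_congr rfl fun j _ => ?_
    have h1 : (∑ k, (c i : ℂ) * c j * ((φ i) k * conj ((φ j) k)) * (inner ℂ (φ i) (φ j) : ℂ))
        = (c i : ℂ) * c j * (∑ k, conj ((φ j) k) * (φ i) k) * (inner ℂ (φ i) (φ j) : ℂ) := by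
      rw [Finset.mul_sum, Finset.sum_mul]
      exact Finset.sum_congr rfl fun k _ => by ring
    have h2 : (∑ k, conj ((φ j) k) * (φ i) k) = (inner ℂ (φ j) (φ i) : ℂ) := by
      rw [PiLp.inner_apply]; exact Finset.sum_congr rfl fun k _ => (RCLike.inner_apply' _ _).symm
    have h3 : (inner ℂ (φ j) (φ i) : ℂ) = conj (inner ℂ (φ i) (φ j) : ℂ) :=
      (inner_conj_symm (φ j) (φ i)).symm
    rw [h1, h2, h3]
    have : conj (inner ℂ (φ i) (φ j) : ℂ) * (inner ℂ (φ i) (φ j) : ℂ)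
        = ((‖(inner ℂ (φ i) (φ j) : ℂ)‖ ^ 2 : ℝ) : ℂ) := by
      rw [mul_comm, Complex.mul_conj, Complex.sq_norm]
    rw [mul_assoc, this]
    push_cast
    ring
  constructor
  · intro hv
    have hSe : ∀ k, S (e k) = e k := fun k => (hv (e k)).symm
    have hc : ((∑ j, c j : ℝ) : ℂ) = (d : ℂ) := by
      rw [← C2]
      simp only [hSe, hee]; simp [Finset.card_fin]
    have hcR : ∑ j, c j = (d : ℝ) := by exact_mod_cast hc
    refine ⟨hcR, ?_⟩
    have hq : ((∑ i, ∑ j, c i * c j * ‖(inner ℂ (φ i) (φ j) : ℂ)‖ ^ 2 : ℝ) : ℂ)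
        = (d : ℂ) := by
      rw [← C1]; simp only [hSe, hee]; simp [Finset.card_fin]
    have hqR : (∑ i, ∑ j, c i * c j * ‖(inner ℂ (φ i) (φ j) : ℂ)‖ ^ 2 : ℝ)
        = (d : ℝ) := by exact_mod_cast hq
    rw [hqR, hcR]
    field_simp
  · rintro ⟨hc, hq⟩
    have hqd : (∑ i, ∑ j, c i * c j * ‖(inner ℂ (φ i) (φ j) : ℂ)‖ ^ 2 : ℝ)
        = (d : ℝ) := by
      rw [hq, hc]; field_simp
    -- sum of squared norms
    have hN1 : ∑ k, ‖S (e k)‖ ^ 2 = (d : ℝ) := by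
      have h := congrArg Complex.re C1
      rw [Complex.re_sum, Complex.ofReal_re, hqd] at h
      rw [← h]
      exact Finset.sum_congr rfl fun k _ => (hre _).symm
    have hN2 : ∑ k, Complex.re (inner ℂ (S (e k)) (e k) : ℂ) = (d : ℝ) := by
      have h := congrArg Complex.re C2
      rw [Complex.re_sum, Complex.ofReal_re, hc] at h
      exact h
    have hN3 : ∑ k : Fin d, ‖e k‖ ^ 2 = (d : ℝ) := by
      simp [he, Finset.card_fin]
    have hA : ∑ k, ‖S (e k) - e k‖ ^ 2 = 0 := by
      have expand : ∀ k, ‖S (e k) - e k‖ ^ 2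
          = ‖S (e k)‖ ^ 2 - 2 * Complex.re (inner ℂ (S (e k)) (e k) : ℂ) + ‖e k‖ ^ 2 :=
        fun k => by
          have h := @norm_sub_sq ℂ _ _ _ _ (S (e k)) (e k)
          rwa [show (RCLike.re : ℂ →+ ℝ) (inner ℂ (S (e k)) (e k) : ℂ)
            = Complex.re (inner ℂ (S (e k)) (e k) : ℂ) from rfl] at h
      rw [Finset.sum_congr rfl fun k _ => expand k, Finset.sum_add_distrib,
        Finset.sum_sub_distrib, hN1, hN3, ← Finset.mul_sum, hN2]
      ring
    have hSe : ∀ k, S (e k) = e k := by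
      intro k
      have hk : ‖S (e k) - e k‖ ^ 2 = 0 := by
        have := (Finset.sum_eq_zero_iff_of_nonneg
          (fun k _ => sq_nonneg (‖S (e k) - e k‖))).mp hA k (Finset.mem_univ k)
        exact this
      have : S (e k) - e k = 0 := by
        rwa [pow_eq_zero_iff (two_ne_zero), norm_eq_zero] at hk
      exact sub_eq_zero.mp this
    -- extend by linearity
    let T : EuclideanSpace ℂ (Fin d) →ₗ[ℂ] EuclideanSpace ℂ (Fin d) :=
      ∑ j, (c j : ℂ) • (((innerSL ℂ (φ j)).smulRight (φ j)).toLinearMap)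
    have hTv : ∀ v, T v = S v := by
      intro v
      rw [show T v = ∑ j, ((c j : ℂ) • (((innerSL ℂ (φ j)).smulRight (φ j)).toLinearMap)) v
        from LinearMap.sum_apply _ _ v, hS]
      refine Finset.sum_congr rfl fun j _ => ?_
      rw [mul_smul, Complex.coe_smul]
      simp
    have hT : T = LinearMap.id := by
      refine Module.Basis.ext (EuclideanSpace.basisFun (Fin d) ℂ).toBasis ?_
      intro k
      rw [OrthonormalBasis.coe_toBasis, EuclideanSpace.basisFun_apply,
        LinearMap.id_apply, hTv]
      exact hSe k
    intro v
    have h := congrArg (fun f : EuclideanSpace ℂ (Fin d) →ₗ[ℂ] EuclideanSpace ℂ (Fin d) => f v) hT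
    simp only [LinearMap.id_apply] at h
    rw [hTv] at h
    exact h.symm
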